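/- arXiv:2002.09767 — 2 statements merged into one kernel-verified Lean document; each statement's English description precedes it below -/
import Mathlib

section
/- Let s ∈ ℂ with Re(s) > 0 and let α > 0. Let (λ_n)_{n ∈ ℕ} be real numbers with λ_n ≥ 1 for all n and such that for every T ∈ ℝ the set {n : λ_n < T} is finite, and let (a_n)_{n ∈ ℕ} be complex numbers. Set ψ(T) = ∑_{n : λ_n < T} a_n·λ_n, and suppose ψ(T) = (e^{sT}/s)·(1 + O(e^{−αT})) as T → ∞. Then ∑_{n : λ_n < T} a_n = (e^{sT}/(sT))·(1 + O(1/T)) as T → ∞. -/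
open MeasureTheory Set Filter

set_option maxHeartbeats 2000000

lemma aux_tendsto_pme (n : ℕ) {c : ℝ} (hc : 0 < c) :
    Tendsto (fun T : ℝ => T ^ n * Real.exp (-(c * T))) atTop (nhds 0) := by
  have h1 : Tendsto (fun T : ℝ => c * T) atTop atTop :=
    Tendsto.const_mul_atTop hc tendsto_id
  have h2 := (Real.tendsto_pow_mul_exp_neg_atTop_nhds_zero n).comp h1
  have h3 := h2.const_mul ((c : ℝ) ^ n)⁻¹
  rw [mul_zero] at h3
  convert h3 using 2 with T
  simp only [Function.comp]
  rw [mul_pow]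
  field_simp

lemma abel_key (l : ℕ → ℝ) (hl : ∀ n, 1 ≤ l n)
    (hfin : ∀ T : ℝ, {n : ℕ | l n < T}.Finite)
    (a : ℕ → ℂ) {T : ℝ} (hT : 1 ≤ T) :
    (∑ᶠ n ∈ {n : ℕ | l n < T}, a n) -
        (∑ᶠ n ∈ {n : ℕ | l n < T}, a n * (l n : ℂ)) / (T : ℂ)
      = ∫ u in Set.Ioc (1:ℝ) T,
          (u ^ (-2 : ℤ)) • (∑ᶠ n ∈ {n : ℕ | l n < u}, a n * (l n : ℂ)) := by
  have hT0 : (0:ℝ) < T := lt_of_lt_of_le one_pos hT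
  have hTc : (T : ℂ) ≠ 0 := by exact_mod_cast ne_of_gt hT0
  set F : Finset ℕ := (hfin T).toFinset with hF
  have hmemF : ∀ n, n ∈ F ↔ l n < T := by
    intro n; simp [hF, Set.Finite.mem_toFinset]
  -- the integrand as a finite sum of indicators
  have hcong : Set.EqOn
      (fun u : ℝ => (u ^ (-2 : ℤ)) • (∑ᶠ n ∈ {n : ℕ | l n < u}, a n * (l n : ℂ)))
      (fun u : ℝ => ∑ n ∈ F,
        Set.indicator (Set.Ioi (l n)) (fun v : ℝ => (v ^ (-2:ℤ)) • (a n * (l n : ℂ))) u)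
      (Set.Ioc (1:ℝ) T) := by
    intro u hu
    have hsub : {n : ℕ | l n < u} ⊆ {n : ℕ | l n < T} := fun n hn =>
      lt_of_lt_of_le hn hu.2
    have hfu : {n : ℕ | l n < u}.Finite := (hfin T).subset hsub
    have h1 : (∑ᶠ n ∈ {n : ℕ | l n < u}, a n * (l n : ℂ))
        = ∑ n ∈ hfu.toFinset, a n * (l n : ℂ) :=
      finsum_mem_eq_finite_toFinset_sum _ _
    have h2 : hfu.toFinset = F.filter (fun n => l n < u) := by
      ext n
      simp only [Set.Finite.mem_toFinset, Set.mem_setOf_eq, Finset.mem_filter, hmemF n]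
      exact ⟨fun h => ⟨lt_of_lt_of_le h hu.2, h⟩, fun h => h.2⟩
    simp only [h1, h2, Finset.sum_filter, Finset.smul_sum]
    refine Finset.sum_congr rfl fun n _ => ?_
    by_cases h : l n < u
    · simp [Set.indicator_of_mem (Set.mem_Ioi.mpr h), h]
    · simp [Set.indicator_of_notMem (fun hc => h (Set.mem_Ioi.mp hc)), h]
  have hint : ∀ n ∈ F, IntegrableOn
      (fun u : ℝ => Set.indicator (Set.Ioi (l n))
        (fun v : ℝ => (v ^ (-2:ℤ)) • (a n * (l n : ℂ))) u) (Set.Ioc (1:ℝ) T) := by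
    intro n _
    refine IntegrableOn.indicator ?_ measurableSet_Ioi
    refine (ContinuousOn.integrableOn_Icc ?_).mono_set Set.Ioc_subset_Icc_self
    refine ContinuousOn.fun_smul ?_ continuousOn_const
    intro v hv
    exact (continuousAt_zpow₀ v (-2)
      (Or.inl (ne_of_gt (lt_of_lt_of_le one_pos hv.1)))).continuousWithinAt
  have hterm : ∀ n ∈ F,
      (∫ u in Set.Ioc (1:ℝ) T, Set.indicator (Set.Ioi (l n))
          (fun v : ℝ => (v ^ (-2:ℤ)) • (a n * (l n : ℂ))) u)
        = a n - a n * (l n : ℂ) / (T : ℂ) := by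
    intro n hn
    have hln : l n < T := (hmemF n).mp hn
    have hl1 : (1:ℝ) ≤ l n := hl n
    have hl0 : (0:ℝ) < l n := lt_of_lt_of_le one_pos hl1
    have hlc : ((l n : ℝ) : ℂ) ≠ 0 := by exact_mod_cast ne_of_gt hl0
    rw [setIntegral_indicator measurableSet_Ioi, Set.Ioc_inter_Ioi,
      sup_eq_right.mpr hl1, ← intervalIntegral.integral_of_le hln.le,
      intervalIntegral.integral_smul_const,
      integral_zpow (Or.inr ⟨by norm_num, Set.notMem_uIcc_of_lt hl0 hT0⟩)]
    have : ((T ^ (-2 + 1 : ℤ) - (l n) ^ (-2 + 1 : ℤ)) / ((-2 : ℤ) + 1 : ℝ))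
        = (l n)⁻¹ - T⁻¹ := by norm_num; ring
    rw [this, Complex.real_smul]
    push_cast
    field_simp
  rw [setIntegral_congr_fun measurableSet_Ioc hcong, integral_finset_sum F hint,
    Finset.sum_congr rfl hterm, Finset.sum_sub_distrib, ← Finset.sum_div]
  congr 1
  · rw [hF, ← finsum_mem_eq_finite_toFinset_sum]
  · rw [hF, ← finsum_mem_eq_finite_toFinset_sum]

/-- Partial summation (Lemma 6.3): from
`∑_{λₙ < T} aₙ·λₙ = (e^{sT}/s)(1 + O(e^{−αT}))` deduce
`∑_{λₙ < T} aₙ = (e^{sT}/(sT))(1 + O(1/T))`. -/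
theorem sum_eq_of_weighted_sum_asymp
    (s : ℂ) (hs : 0 < s.re) (α : ℝ) (hα : 0 < α)
    (l : ℕ → ℝ) (hl : ∀ n, 1 ≤ l n)
    (hfin : ∀ T : ℝ, {n : ℕ | l n < T}.Finite)
    (a : ℕ → ℂ)
    (hψ : ∃ C : ℝ, 0 < C ∧ ∃ T₀ : ℝ, ∀ T : ℝ, T₀ ≤ T →
      ‖((∑ᶠ n ∈ {n : ℕ | l n < T}, a n * (l n : ℂ)) -
          Complex.exp (s * T) / s)‖
        ≤ C * ‖(Complex.exp (s * T) / s)‖ * Real.exp (-α * T)) :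
    ∃ C : ℝ, 0 < C ∧ ∃ T₀ : ℝ, ∀ T : ℝ, T₀ ≤ T →
      ‖((∑ᶠ n ∈ {n : ℕ | l n < T}, a n) -
          Complex.exp (s * T) / (s * T))‖
        ≤ C * ‖(Complex.exp (s * T) / (s * T))‖ * (1 / T) := by
  obtain ⟨C, hC, T₀, hC'⟩ := hψ
  have hsne : s ≠ 0 := by
    intro h; rw [h] at hs; simp at hs
  have habs : 0 < ‖s‖ := norm_pos_iff.mpr hsne
  set σ := s.re with hσdef
  set T₁ : ℝ := max T₀ 1 with hT₁d
  set B : ℝ := ∑ n ∈ (hfin T₁).toFinset, ‖a n * (l n : ℂ)‖ with hBd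
  have hB0 : 0 ≤ B := Finset.sum_nonneg fun n _ => norm_nonneg _
  set D : ℝ := (1 + C) / ‖s‖ with hDd
  have hD0 : 0 < D := by positivity
  have habs_exp : ∀ u : ℝ, ‖Complex.exp (s * u) / s‖
      = Real.exp (σ * u) / ‖s‖ := by
    intro u
    rw [norm_div, Complex.norm_exp]
    congr 2
    simp [Complex.mul_re, hσdef]
  -- pointwise bound on ψ(u)
  have hψbound : ∀ u : ℝ, 1 ≤ u →
      ‖∑ᶠ n ∈ {n : ℕ | l n < u}, a n * (l n : ℂ)‖
        ≤ B + D * Real.exp (σ * u) := by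
    intro u hu
    rcases le_total u T₁ with h | h
    · have hsub : {n : ℕ | l n < u} ⊆ {n : ℕ | l n < T₁} := fun n hn =>
        lt_of_lt_of_le hn h
      have hfu : {n : ℕ | l n < u}.Finite := (hfin T₁).subset hsub
      have h1 : (∑ᶠ n ∈ {n : ℕ | l n < u}, a n * (l n : ℂ))
          = ∑ n ∈ hfu.toFinset, a n * (l n : ℂ) := finsum_mem_eq_finite_toFinset_sum _ _
      have h2 : ‖∑ n ∈ hfu.toFinset, a n * (l n : ℂ)‖
          ≤ ∑ n ∈ hfu.toFinset, ‖a n * (l n : ℂ)‖ :=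
        norm_sum_le _ _
      have h3 : (∑ n ∈ hfu.toFinset, ‖a n * (l n : ℂ)‖) ≤ B := by
        refine Finset.sum_le_sum_of_subset_of_nonneg ?_
          (fun n _ _ => norm_nonneg _)
        exact Set.Finite.toFinset_subset_toFinset.mpr hsub
      have h4 : 0 ≤ D * Real.exp (σ * u) := by positivity
      rw [h1]
      linarith [h2.trans h3]
    · have hu0 : T₀ ≤ u := le_trans (le_max_left T₀ 1) h
      have h5 := hC' u hu0
      rw [habs_exp u] at h5
      have hu0' : (0:ℝ) ≤ u := le_trans zero_le_one hu
      have hE1 : Real.exp (-α * u) ≤ 1 := by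
        rw [show (1:ℝ) = Real.exp 0 from (Real.exp_zero).symm]
        apply Real.exp_le_exp.mpr
        nlinarith
      have htri : ‖∑ᶠ n ∈ {n : ℕ | l n < u}, a n * (l n : ℂ)‖
          ≤ ‖(∑ᶠ n ∈ {n : ℕ | l n < u}, a n * (l n : ℂ))
              - Complex.exp (s * u) / s‖ + ‖Complex.exp (s * u) / s‖ := by
        simpa using norm_add_le
          ((∑ᶠ n ∈ {n : ℕ | l n < u}, a n * (l n : ℂ)) - Complex.exp (s * u) / s)
          (Complex.exp (s * u) / s)
      rw [habs_exp u] at htri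
      have hDrw : D * Real.exp (σ * u)
          = Real.exp (σ * u) / ‖s‖
            + C * (Real.exp (σ * u) / ‖s‖) := by
        rw [hDd]; field_simp
      have hCE : C * (Real.exp (σ * u) / ‖s‖) * Real.exp (-α * u)
          ≤ C * (Real.exp (σ * u) / ‖s‖) := by
        nlinarith [Real.exp_pos (σ * u), mul_pos hC (div_pos (Real.exp_pos (σ*u)) habs)]
      linarith
  -- eventual smallness of the sub-main terms
  have hev : ∀ᶠ T : ℝ in Filter.atTop,
      B * ‖s‖ * (T ^ 2 * Real.exp (-(σ * T)))
        + D * ‖s‖ * (T ^ 3 * Real.exp (-(σ / 2 * T))) ≤ 1 / 2 := by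
    have h1 := (aux_tendsto_pme 2 hs).const_mul (B * ‖s‖)
    have h2 := (aux_tendsto_pme 3 (half_pos hs)).const_mul (D * ‖s‖)
    have h3 := h1.add h2
    rw [mul_zero, mul_zero, add_zero] at h3
    exact h3.eventually_le_const (by norm_num : (0:ℝ) < 1/2)
  obtain ⟨T₂, hT₂⟩ := Filter.eventually_atTop.mp hev
  refine ⟨C / α + 1 + 4 * D * ‖s‖ / σ, by positivity,
    max (max T₁ 2) T₂, fun T hT => ?_⟩
  have hTT₁ : T₁ ≤ T := le_trans (le_max_left T₁ 2) (le_trans (le_max_left _ _) hT)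
  have hT2 : (2:ℝ) ≤ T := le_trans (le_max_right T₁ 2) (le_trans (le_max_left _ _) hT)
  have hTT₂ : T₂ ≤ T := le_trans (le_max_right _ _) hT
  have hT1 : (1:ℝ) ≤ T := by linarith
  have hT0 : (0:ℝ) < T := by linarith
  have hTc : (T : ℂ) ≠ 0 := by exact_mod_cast ne_of_gt hT0
  -- decompose
  have hkey := abel_key l hl hfin a hT1
  have heq : (∑ᶠ n ∈ {n : ℕ | l n < T}, a n) - Complex.exp (s * T) / (s * T)
      = ((∑ᶠ n ∈ {n : ℕ | l n < T}, a n * (l n : ℂ)) - Complex.exp (s * T) / s) / (T : ℂ)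
        + ∫ u in Set.Ioc (1:ℝ) T,
            (u ^ (-2 : ℤ)) • (∑ᶠ n ∈ {n : ℕ | l n < u}, a n * (l n : ℂ)) := by
    rw [← hkey]
    field_simp
    ring
  -- bound the first piece
  have hb1 : ‖((∑ᶠ n ∈ {n : ℕ | l n < T}, a n * (l n : ℂ))
        - Complex.exp (s * T) / s) / (T : ℂ)‖
      ≤ (C / α) * (Real.exp (σ * T) / (‖s‖ * T ^ 2)) := by
    rw [norm_div, Complex.norm_real, Real.norm_eq_abs, abs_of_pos hT0]
    have h5 := hC' T (le_trans (le_max_left T₀ 1) hTT₁)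
    rw [habs_exp T] at h5
    have hexp : Real.exp (-α * T) ≤ 1 / (α * T) := by
      rw [neg_mul, Real.exp_neg, one_div]
      apply inv_anti₀ (by positivity)
      nlinarith [Real.add_one_le_exp (α * T)]
    have h6 : ‖(∑ᶠ n ∈ {n : ℕ | l n < T}, a n * (l n : ℂ))
          - Complex.exp (s * T) / s‖
        ≤ C * (Real.exp (σ * T) / ‖s‖) * (1 / (α * T)) := by
      refine h5.trans ?_
      gcongr
    calc ‖(∑ᶠ n ∈ {n : ℕ | l n < T}, a n * (l n : ℂ))
          - Complex.exp (s * T) / s‖ / T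
        ≤ (C * (Real.exp (σ * T) / ‖s‖) * (1 / (α * T))) / T := by gcongr
      _ = (C / α) * (Real.exp (σ * T) / (‖s‖ * T ^ 2)) := by
          field_simp
  -- continuity helpers
  have hzc : ContinuousOn (fun u : ℝ => (u:ℝ) ^ (-2:ℤ)) {(0:ℝ)}ᶜ := fun v hv =>
    (continuousAt_zpow₀ v (-2) (Or.inl hv)).continuousWithinAt
  have hexpc : Continuous (fun u : ℝ => Real.exp (σ * u)) :=
    Real.continuous_exp.comp (continuous_const.mul continuous_id)
  have hgc : ContinuousOn (fun u : ℝ => (u ^ (-2:ℤ)) * (B + D * Real.exp (σ * u)))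
      {(0:ℝ)}ᶜ :=
    hzc.mul (continuousOn_const.add (continuousOn_const.mul hexpc.continuousOn))
  have hcompl : ∀ {aa bb : ℝ}, (0:ℝ) < aa → aa ≤ bb → Set.uIcc aa bb ⊆ {(0:ℝ)}ᶜ := by
    intro aa bb ha hab v hv
    rw [Set.uIcc_of_le hab] at hv
    exact ne_of_gt (lt_of_lt_of_le ha hv.1)
  -- bound the integral by a real integral
  have hIbound : ‖∫ u in Set.Ioc (1:ℝ) T,
        (u ^ (-2 : ℤ)) • (∑ᶠ n ∈ {n : ℕ | l n < u}, a n * (l n : ℂ))‖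
      ≤ ∫ u in Set.Ioc (1:ℝ) T, (u ^ (-2:ℤ)) * (B + D * Real.exp (σ * u)) := by
    refine MeasureTheory.norm_integral_le_of_norm_le ?_ ?_
    · exact ((hgc.mono (by
        intro v hv
        exact ne_of_gt (lt_of_lt_of_le one_pos hv.1))).integrableOn_Icc).mono_set
        Set.Ioc_subset_Icc_self
    · refine (MeasureTheory.ae_restrict_iff' measurableSet_Ioc).mpr
        (Filter.Eventually.of_forall fun u hu => ?_)
      have hu1 : (1:ℝ) ≤ u := hu.1.le
      have hu0 : (0:ℝ) < u := lt_of_lt_of_le one_pos hu1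
      rw [norm_smul, Real.norm_eq_abs, abs_of_pos (zpow_pos hu0 _)]
      exact mul_le_mul_of_nonneg_left (hψbound u hu1) (le_of_lt (zpow_pos hu0 _))
  -- evaluate/bound the real integral
  have hThalf1 : (1:ℝ) ≤ T / 2 := by linarith
  have hThalfT : T / 2 ≤ T := by linarith
  have hint1 : ∀ {aa bb : ℝ}, (0:ℝ) < aa → aa ≤ bb →
      IntervalIntegrable (fun u : ℝ => (u ^ (-2:ℤ)) * (B + D * Real.exp (σ * u)))
        MeasureTheory.volume aa bb := fun {aa bb} ha hab =>
    (hgc.mono (hcompl ha hab)).intervalIntegrable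
  have hintB : ∀ {aa bb : ℝ}, (0:ℝ) < aa → aa ≤ bb →
      IntervalIntegrable (fun u : ℝ => B * (u ^ (-2:ℤ)))
        MeasureTheory.volume aa bb := fun {aa bb} ha hab =>
    ((continuousOn_const.mul (hzc.mono (hcompl ha hab)))).intervalIntegrable
  have hintD : ∀ {aa bb : ℝ}, (0:ℝ) < aa → aa ≤ bb →
      IntervalIntegrable (fun u : ℝ => D * ((u ^ (-2:ℤ)) * Real.exp (σ * u)))
        MeasureTheory.volume aa bb := fun {aa bb} ha hab =>
    (continuousOn_const.mul ((hzc.mono (hcompl ha hab)).mul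
      hexpc.continuousOn)).intervalIntegrable
  -- bound the real integral
  have hzpow_eq : ∀ u : ℝ, u ^ (-2:ℤ) = (u^2)⁻¹ := by
    intro u; rw [zpow_neg]; norm_cast
  have hIocint : (∫ u in Set.Ioc (1:ℝ) T, (u ^ (-2:ℤ)) * (B + D * Real.exp (σ * u)))
      ≤ B + D * T * Real.exp (σ * (T/2)) + (4 * D / σ) * (Real.exp (σ * T) / T ^ 2) := by
    rw [← intervalIntegral.integral_of_le hT1]
    have hsplit : (∫ u in (1:ℝ)..T, (u ^ (-2:ℤ)) * (B + D * Real.exp (σ * u)))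
        = (∫ u in (1:ℝ)..T, B * (u ^ (-2:ℤ)))
          + ∫ u in (1:ℝ)..T, D * ((u ^ (-2:ℤ)) * Real.exp (σ * u)) := by
      rw [← intervalIntegral.integral_add (hintB one_pos hT1) (hintD one_pos hT1)]
      apply intervalIntegral.integral_congr
      intro u _; ring
    rw [hsplit]
    have hIB : (∫ u in (1:ℝ)..T, B * (u ^ (-2:ℤ))) ≤ B := by
      rw [intervalIntegral.integral_const_mul,
        integral_zpow (Or.inr ⟨by norm_num, Set.notMem_uIcc_of_lt one_pos hT0⟩)]
      have h1 : (T ^ (-2+1:ℤ) - (1:ℝ) ^ (-2+1:ℤ)) / ((-2:ℤ)+1 : ℝ) = 1 - T⁻¹ := by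
        norm_num
        ring
      rw [h1]
      have h2 : (0:ℝ) ≤ T⁻¹ := by positivity
      nlinarith
    have hID : (∫ u in (1:ℝ)..T, D * ((u ^ (-2:ℤ)) * Real.exp (σ * u)))
        ≤ D * T * Real.exp (σ * (T/2)) + (4 * D / σ) * (Real.exp (σ * T) / T ^ 2) := by
      rw [← intervalIntegral.integral_add_adjacent_intervals
        (hintD one_pos hThalf1) (hintD (by linarith) hThalfT)]
      have hp1 : (∫ u in (1:ℝ)..(T/2), D * ((u ^ (-2:ℤ)) * Real.exp (σ * u)))
          ≤ D * T * Real.exp (σ * (T/2)) := by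
        have hmono : ∀ u ∈ Set.Icc (1:ℝ) (T/2),
            D * ((u ^ (-2:ℤ)) * Real.exp (σ * u)) ≤ D * Real.exp (σ * (T/2)) := by
          intro u hu
          have hu0 : (0:ℝ) < u := lt_of_lt_of_le one_pos hu.1
          have hsq : (1:ℝ) ≤ u^2 := by nlinarith [hu.1]
          have h1 : (u:ℝ) ^ (-2:ℤ) ≤ 1 := by
            rw [hzpow_eq u]
            simpa using inv_anti₀ one_pos hsq
          have h2 : Real.exp (σ * u) ≤ Real.exp (σ * (T/2)) :=
            Real.exp_le_exp.mpr (by nlinarith [hu.2])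
          have h3 : (0:ℝ) < Real.exp (σ * u) := Real.exp_pos _
          have h4 : (0:ℝ) < u ^ (-2:ℤ) := zpow_pos hu0 _
          have h5 : u ^ (-2:ℤ) * Real.exp (σ * u) ≤ Real.exp (σ * (T/2)) := by
            calc u ^ (-2:ℤ) * Real.exp (σ * u) ≤ 1 * Real.exp (σ * (T/2)) :=
                  mul_le_mul h1 h2 h3.le zero_le_one
              _ = Real.exp (σ * (T/2)) := one_mul _
          exact mul_le_mul_of_nonneg_left h5 hD0.le
        calc (∫ u in (1:ℝ)..(T/2), D * ((u ^ (-2:ℤ)) * Real.exp (σ * u)))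
            ≤ ∫ _u in (1:ℝ)..(T/2), D * Real.exp (σ * (T/2)) :=
              intervalIntegral.integral_mono_on hThalf1 (hintD one_pos hThalf1)
                intervalIntegrable_const hmono
          _ = (T/2 - 1) * (D * Real.exp (σ * (T/2))) := by
              rw [intervalIntegral.integral_const, smul_eq_mul]
          _ ≤ T * (D * Real.exp (σ * (T/2))) :=
              mul_le_mul_of_nonneg_right (by linarith)
                (by positivity : (0:ℝ) ≤ D * Real.exp (σ * (T/2)))
          _ = D * T * Real.exp (σ * (T/2)) := by ring
      have hp2 : (∫ u in (T/2)..T, D * ((u ^ (-2:ℤ)) * Real.exp (σ * u)))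
          ≤ (4 * D / σ) * (Real.exp (σ * T) / T ^ 2) := by
        have hmono : ∀ u ∈ Set.Icc (T/2) T,
            D * ((u ^ (-2:ℤ)) * Real.exp (σ * u)) ≤ (D * (4 / T^2)) * Real.exp (σ * u) := by
          intro u hu
          have hu0 : (0:ℝ) < u := by nlinarith [hu.1]
          have hsq : ((T/2):ℝ)^2 ≤ u^2 := by nlinarith [hu.1]
          have h1 : (u:ℝ) ^ (-2:ℤ) ≤ 4 / T^2 := by
            rw [hzpow_eq u]
            have h2 := inv_anti₀ (by positivity : (0:ℝ) < (T/2)^2) hsq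
            have h3 : (((T/2):ℝ)^2)⁻¹ = 4 / T^2 := by
              field_simp; ring
            linarith [h2.trans_eq h3]
          calc D * ((u ^ (-2:ℤ)) * Real.exp (σ * u))
              ≤ D * ((4 / T^2) * Real.exp (σ * u)) :=
                mul_le_mul_of_nonneg_left
                  (mul_le_mul_of_nonneg_right h1 (Real.exp_pos _).le) hD0.le
            _ = (D * (4 / T^2)) * Real.exp (σ * u) := by ring
        calc (∫ u in (T/2)..T, D * ((u ^ (-2:ℤ)) * Real.exp (σ * u)))
            ≤ ∫ u in (T/2)..T, (D * (4/T^2)) * Real.exp (σ * u) :=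
              intervalIntegral.integral_mono_on hThalfT (hintD (by linarith) hThalfT)
                ((continuous_const.mul hexpc).intervalIntegrable _ _) hmono
          _ = (D * (4/T^2)) * (σ⁻¹ • (Real.exp (σ * T) - Real.exp (σ * (T/2)))) := by
              rw [intervalIntegral.integral_const_mul,
                intervalIntegral.integral_comp_mul_left Real.exp (ne_of_gt hs),
                integral_exp]
          _ ≤ (4 * D / σ) * (Real.exp (σ * T) / T ^ 2) := by
              rw [smul_eq_mul]
              have he : (0:ℝ) < Real.exp (σ * (T/2)) := Real.exp_pos _
              have heq2 : (D * (4/T^2)) * (σ⁻¹ * (Real.exp (σ * T) - Real.exp (σ * (T/2))))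
                  = (4 * D / σ) * ((Real.exp (σ * T) - Real.exp (σ * (T/2))) / T ^ 2) := by
                field_simp
              rw [heq2]
              gcongr
              linarith
      linarith
    linarith
  -- eventual smallness gives the sub-main terms are small
  have hsmall : B + D * T * Real.exp (σ * (T/2))
      ≤ Real.exp (σ * T) / (‖s‖ * T ^ 2) := by
    rw [le_div_iff₀ (by positivity)]
    have h := hT₂ T hTT₂
    have hmul := mul_le_mul_of_nonneg_right h (le_of_lt (Real.exp_pos (σ * T)))
    have e2 : Real.exp (-(σ/2 * T)) * Real.exp (σ * T) = Real.exp (σ * (T/2)) := by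
      rw [← Real.exp_add]; congr 1; ring
    have hrw : (B + D * T * Real.exp (σ * (T/2))) * (‖s‖ * T ^ 2)
        = (B * ‖s‖ * (T ^ 2 * Real.exp (-(σ * T)))
           + D * ‖s‖ * (T ^ 3 * Real.exp (-(σ / 2 * T)))) * Real.exp (σ * T) := by
      rw [← e2, Real.exp_neg (σ * T), Real.exp_neg (σ / 2 * T)]
      field_simp
    rw [hrw]
    calc _ ≤ 1/2 * Real.exp (σ * T) := hmul
      _ ≤ Real.exp (σ * T) := by nlinarith [Real.exp_pos (σ * T)]
  -- assemble
  have habsT : ‖Complex.exp (s * T) / (s * T)‖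
      = Real.exp (σ * T) / (‖s‖ * T) := by
    rw [norm_div, Complex.norm_exp, norm_mul, Complex.norm_real, Real.norm_eq_abs, abs_of_pos hT0]
    congr 2
    simp [Complex.mul_re, hσdef]
  rw [heq, habsT]
  have h4eq : (4*D/σ) * (Real.exp (σ*T)/T^2)
      = (4*D*‖s‖/σ) * (Real.exp (σ*T)/(‖s‖ * T^2)) := by
    field_simp
  calc ‖((∑ᶠ n ∈ {n : ℕ | l n < T}, a n * (l n : ℂ))
          - Complex.exp (s * T) / s) / (T : ℂ)
        + ∫ u in Set.Ioc (1:ℝ) T,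
            (u ^ (-2 : ℤ)) • (∑ᶠ n ∈ {n : ℕ | l n < u}, a n * (l n : ℂ))‖
      ≤ ‖((∑ᶠ n ∈ {n : ℕ | l n < T}, a n * (l n : ℂ))
          - Complex.exp (s * T) / s) / (T : ℂ)‖
        + ‖∫ u in Set.Ioc (1:ℝ) T,
            (u ^ (-2 : ℤ)) • (∑ᶠ n ∈ {n : ℕ | l n < u}, a n * (l n : ℂ))‖ :=
        norm_add_le _ _
    _ ≤ (C/α) * (Real.exp (σ*T)/(‖s‖ * T^2))
        + (B + D * T * Real.exp (σ * (T/2)) + (4*D/σ) * (Real.exp (σ*T)/T^2)) := by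
        linarith [hb1, hIbound.trans hIocint]
    _ ≤ (C/α) * (Real.exp (σ*T)/(‖s‖ * T^2))
        + (Real.exp (σ*T)/(‖s‖ * T^2)
           + (4*D*‖s‖/σ) * (Real.exp (σ*T)/(‖s‖ * T^2))) := by
        linarith [hsmall, h4eq.le]
    _ = (C / α + 1 + 4 * D * ‖s‖ / σ)
          * (Real.exp (σ * T) / (‖s‖ * T)) * (1 / T) := by
        field_simp
        ring
end

section
/- Let h > 0 and h′ < h, and let N : [2,∞) → ℝ be a nondecreasing function with N(T) = li(e^{hT}) + O(e^{h′T}) as T → ∞. Then for every α with 0 < α < h − h′ one has N(T + e^{−αT}) − N(T − e^{−αT}) = O(e^{(h−α)T}) as T → ∞. -/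
/-- The logarithmic integral `li x = ∫_2^x dt / log t`. -/
noncomputable def li (x : ℝ) : ℝ := ∫ t in (2 : ℝ)..x, 1 / Real.log t

lemma li_integrable {u v : ℝ} (hu : 2 ≤ u) (huv : u ≤ v) :
    IntervalIntegrable (fun t => 1 / Real.log t) MeasureTheory.volume u v := by
  apply ContinuousOn.intervalIntegrable
  apply ContinuousOn.div continuousOn_const (Real.continuousOn_log.mono ?_) ?_
  · intro t ht
    rw [Set.uIcc_of_le huv] at ht
    simp only [Set.mem_compl_iff, Set.mem_singleton_iff]
    intro h0; rw [h0] at ht; linarith [ht.1]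
  · intro t ht
    rw [Set.uIcc_of_le huv] at ht
    have h1 : (1:ℝ) < t := by linarith [ht.1]
    exact ne_of_gt (Real.log_pos h1)

lemma li_diff_le {a b : ℝ} (ha : 2 < a) (hab : a ≤ b) :
    li b - li a ≤ (b - a) / Real.log a := by
  have I1 := li_integrable (le_refl 2) ha.le
  have I2 := li_integrable ha.le hab
  have key : li b - li a = ∫ t in a..b, 1 / Real.log t := by
    rw [li, li, ← intervalIntegral.integral_add_adjacent_intervals I1 I2]
    ring
  rw [key]
  have hloga : 0 < Real.log a := Real.log_pos (by linarith)
  have hle : (∫ t in a..b, 1 / Real.log t) ≤ ∫ _t in a..b, 1 / Real.log a := by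
    apply intervalIntegral.integral_mono_on hab I2 intervalIntegrable_const
    intro t ht
    have h1 : Real.log a ≤ Real.log t := Real.log_le_log (by linarith) ht.1
    exact one_div_le_one_div_of_le hloga h1
  calc (∫ t in a..b, 1 / Real.log t) ≤ ∫ _t in a..b, 1 / Real.log a := hle
    _ = (b - a) * (1 / Real.log a) := by rw [intervalIntegral.integral_const]; simp
    _ = (b - a) / Real.log a := by rw [mul_one_div]


set_option maxHeartbeats 1000000 in
/-- If a nondecreasing counting function satisfies `N(T) = li(e^{hT}) + O(e^{h'T})`,
then `N(T + e^{−αT}) − N(T − e^{−αT}) = O(e^{(h−α)T})` for `0 < α < h − h'`. -/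
theorem counting_short_interval_bound
    (h h' : ℝ) (hh : 0 < h) (hh' : h' < h)
    (N : ℝ → ℝ) (hmono : ∀ x y : ℝ, 2 ≤ x → x ≤ y → N x ≤ N y)
    (hN : ∃ C : ℝ, 0 < C ∧ ∃ T₀ : ℝ, 2 ≤ T₀ ∧ ∀ T : ℝ, T₀ ≤ T →
      |N T - li (Real.exp (h * T))| ≤ C * Real.exp (h' * T)) :
    ∀ α : ℝ, 0 < α → α < h - h' →
      ∃ C : ℝ, 0 < C ∧ ∃ T₀ : ℝ, 2 ≤ T₀ ∧ ∀ T : ℝ, T₀ ≤ T →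
        |N (T + Real.exp (-α * T)) - N (T - Real.exp (-α * T))|
          ≤ C * Real.exp ((h - α) * T) := by
  obtain ⟨C, hC, T₀', hT₀', hbound⟩ := hN
  intro α hα hαh
  refine ⟨2 * h * Real.exp h + 2 * C * Real.exp |h'|, by positivity,
    max (max (T₀' + 1) 3) ((1 + Real.log 2) / h + 2), ?_, ?_⟩
  · have : (2:ℝ) ≤ 3 := by norm_num
    exact le_trans this (le_trans (le_max_right _ _) (le_max_left _ _))
  intro T hT
  set ε := Real.exp (-α * T) with hεdef
  have hT3 : (3:ℝ) ≤ T := le_trans (le_trans (le_max_right _ _) (le_max_left _ _)) hT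
  have hT1 : T₀' + 1 ≤ T := le_trans (le_trans (le_max_left _ _) (le_max_left _ _)) hT
  have hTh : (1 + Real.log 2) / h + 2 ≤ T := le_trans (le_max_right _ _) hT
  have hε0 : 0 < ε := Real.exp_pos _
  have hε1 : ε ≤ 1 := by
    rw [hεdef]
    apply Real.exp_le_one_iff.mpr
    nlinarith
  have hTe2 : 2 ≤ T - ε := by linarith
  have hTeT0 : T₀' ≤ T - ε := by linarith
  have hTeT0' : T₀' ≤ T + ε := by linarith
  set a := Real.exp (h * (T - ε)) with hadef
  set b := Real.exp (h * (T + ε)) with hbdef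
  have hla : Real.log a = h * (T - ε) := Real.log_exp _
  have hla1 : 1 + Real.log 2 ≤ Real.log a := by
    rw [hla]
    have h1 : (1 + Real.log 2) / h + 1 ≤ T - ε := by linarith
    have h2 := mul_le_mul_of_nonneg_left h1 hh.le
    have h3 : h * ((1 + Real.log 2) / h + 1) = (1 + Real.log 2) + h := by
      field_simp
    linarith [h2, h3.symm.le]
  have hlog2 : (0:ℝ) < Real.log 2 := Real.log_pos (by norm_num)
  have ha0 : (0:ℝ) < a := Real.exp_pos _
  have ha2 : 2 < a := by
    have : Real.log 2 < Real.log a := by linarith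
    calc (2:ℝ) = Real.exp (Real.log 2) := (Real.exp_log (by norm_num)).symm
      _ < Real.exp (Real.log a) := Real.exp_lt_exp.2 this
      _ = a := Real.exp_log (by linarith)
  have hab : a ≤ b := by
    apply Real.exp_le_exp.2
    nlinarith
  have hli := li_diff_le ha2 hab
  have hB1 := hbound (T - ε) hTeT0
  have hB2 := hbound (T + ε) hTeT0'
  rw [← hadef] at hB1
  rw [← hbdef] at hB2
  have hmle : N (T - ε) ≤ N (T + ε) := hmono _ _ hTe2 (by linarith)
  rw [abs_of_nonneg (sub_nonneg.2 hmle)]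
  have hB1' := abs_le.1 hB1
  have hB2' := abs_le.1 hB2
  -- bound li b - li a
  have hlog1 : (1:ℝ) ≤ Real.log a := by linarith
  have hdivle : (b - a) / Real.log a ≤ b - a :=
    div_le_self (by linarith) hlog1
  -- b - a ≤ 2 h e^h * exp((h-α)T)
  have hba : b - a ≤ 2 * h * Real.exp h * Real.exp ((h - α) * T) := by
    have e1 : b = Real.exp (h * T) * Real.exp (h * ε) := by
      rw [hbdef, ← Real.exp_add]; ring_nf
    have e2 : a = Real.exp (h * T) * Real.exp (-(h * ε)) := by
      rw [hadef, ← Real.exp_add]; ring_nf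
    have hkey : Real.exp (h * ε) - Real.exp (-(h * ε)) ≤ 2 * (h * ε) * Real.exp (h * ε) := by
      have := Real.add_one_le_exp (-(2 * (h * ε)))
      have hepos := Real.exp_pos (h * ε)
      have hexp2 : Real.exp (-(2 * (h * ε))) * Real.exp (h * ε) = Real.exp (-(h * ε)) := by
        rw [← Real.exp_add]; ring_nf
      nlinarith [mul_le_mul_of_nonneg_right this hepos.le]
    have hexph : Real.exp (h * ε) ≤ Real.exp h := by
      apply Real.exp_le_exp.2; nlinarith
    have hE : Real.exp (h * T) * ε = Real.exp ((h - α) * T) := by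
      rw [hεdef, ← Real.exp_add]; ring_nf
    have hhε : 0 ≤ h * ε := by positivity
    calc b - a = Real.exp (h * T) * (Real.exp (h * ε) - Real.exp (-(h * ε))) := by
          rw [e1, e2]; ring
      _ ≤ Real.exp (h * T) * (2 * (h * ε) * Real.exp (h * ε)) := by
          apply mul_le_mul_of_nonneg_left hkey (Real.exp_pos _).le
      _ ≤ Real.exp (h * T) * (2 * (h * ε) * Real.exp h) := by
          apply mul_le_mul_of_nonneg_left _ (Real.exp_pos _).le
          apply mul_le_mul_of_nonneg_left hexph
          positivity
      _ = 2 * h * Real.exp h * (Real.exp (h * T) * ε) := by ring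
      _ = 2 * h * Real.exp h * Real.exp ((h - α) * T) := by rw [hE]
  -- error terms
  have herr : ∀ s : ℝ, s = T - ε ∨ s = T + ε →
      Real.exp (h' * s) ≤ Real.exp |h'| * Real.exp ((h - α) * T) := by
    intro s hs
    rw [← Real.exp_add]
    apply Real.exp_le_exp.2
    have habs : |h' * ε| ≤ |h'| := by
      rw [abs_mul, abs_of_pos hε0]
      nlinarith [abs_nonneg h']
    have h1 : h' * ε ≤ |h'| := le_trans (le_abs_self _) habs
    have h2 : -(h' * ε) ≤ |h'| := le_trans (neg_le_abs _) habs
    have h3 : h' * T ≤ (h - α) * T := by nlinarith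
    rcases hs with rfl | rfl <;> nlinarith
  have hE1 := herr (T - ε) (Or.inl rfl)
  have hE2 := herr (T + ε) (Or.inr rfl)
  have hCE1 := mul_le_mul_of_nonneg_left hE1 hC.le
  have hCE2 := mul_le_mul_of_nonneg_left hE2 hC.le
  calc N (T + ε) - N (T - ε)
      ≤ (li b - li a) + C * Real.exp (h' * (T + ε)) + C * Real.exp (h' * (T - ε)) := by
        linarith [hB1'.1, hB1'.2, hB2'.1, hB2'.2]
    _ ≤ (b - a) + C * (Real.exp |h'| * Real.exp ((h - α) * T))
          + C * (Real.exp |h'| * Real.exp ((h - α) * T)) := by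
        linarith [le_trans hli hdivle]
    _ ≤ 2 * h * Real.exp h * Real.exp ((h - α) * T)
          + C * (Real.exp |h'| * Real.exp ((h - α) * T))
          + C * (Real.exp |h'| * Real.exp ((h - α) * T)) := by linarith
    _ = (2 * h * Real.exp h + 2 * C * Real.exp |h'|) * Real.exp ((h - α) * T) := by ring
end
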